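/- arXiv:0710.5838 — 2 statements merged into one kernel-verified Lean document; each statement's English description precedes it below -/
import Mathlib

section
/- A nonempty finite fraction F ⊆ D = {−1,+1}^m is a coset of a subgroup of D if and only if for every exponent vector γ ∈ Fin m → ZMod 2, the integer Σ_{t ∈ F} X^γ(t) belongs to {−|F|, 0, |F|}. (Equivalently: any two monomial interactions X^α, X^β are, on F, either orthogonal or totally aliased, since Σ_{t∈F} X^α(t)X^β(t) = Σ_{t∈F} X^{α+β}(t).) -/
open Pointwise

/-- The monomial `X^γ` on the full factorial design `D = {-1,+1}^m`:
`X^γ(t) = ∏_{i : γ i = 1} t i`. -/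
def Xmon {m : ℕ} (γ : Fin m → ZMod 2) (t : Fin m → ℤˣ) : ℤˣ :=
  ∏ i ∈ Finset.univ.filter (fun i => γ i = 1), t i

lemma sq_one {m : ℕ} (x : Fin m → ℤˣ) : x * x = 1 := by
  funext i; exact Int.units_mul_self (x i)

lemma inv_self {m : ℕ} (x : Fin m → ℤˣ) : x⁻¹ = x :=
  inv_eq_of_mul_eq_one_right (sq_one x)

lemma mul_cancel_left' {m : ℕ} (a x : Fin m → ℤˣ) : a * (a * x) = x := by
  rw [← mul_assoc, sq_one, one_mul]

lemma smul_eq_mul'' {m : ℕ} (a x : Fin m → ℤˣ) : a • x = a * x := by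
  funext i
  simp [Pi.smul_apply', Units.smul_def, Units.ext_iff]

lemma Xmon_mul {m : ℕ} (γ : Fin m → ZMod 2) (t u : Fin m → ℤˣ) :
    Xmon γ (t * u) = Xmon γ t * Xmon γ u := by
  simp [Xmon, Finset.prod_mul_distrib]

lemma Xmon_mul_val {m : ℕ} (γ : Fin m → ZMod 2) (t u : Fin m → ℤˣ) :
    (Xmon γ (t * u) : ℤ) = (Xmon γ t : ℤ) * (Xmon γ u : ℤ) := by
  rw [Xmon_mul]; exact Units.val_mul _ _

lemma sum_Xmon {m : ℕ} (x : Fin m → ℤˣ) :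
    ∑ γ : Fin m → ZMod 2, (Xmon γ x : ℤ) = if x = 1 then 2 ^ m else 0 := by
  have h1 : ∀ γ : Fin m → ZMod 2, (Xmon γ x : ℤ) =
      ∏ i : Fin m, (if γ i = 1 then (x i : ℤ) else 1) := by
    intro γ
    rw [Xmon, Units.coe_prod, Finset.prod_filter]
  simp only [h1]
  rw [← Fintype.prod_sum (fun i (c : ZMod 2) => if c = 1 then (x i : ℤ) else 1)]
  have h2 : ∀ i : Fin m, ∑ c : ZMod 2, (if c = 1 then (x i : ℤ) else 1) = 1 + (x i : ℤ) := by
    intro i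
    rw [show (Finset.univ : Finset (ZMod 2)) = {0, 1} from rfl]
    simp
  simp only [h2]
  by_cases hx : x = 1
  · subst hx; simp
  · have : ∃ i, x i ≠ 1 := by
      by_contra h
      push_neg at h
      exact hx (funext h)
    obtain ⟨i, hi⟩ := this
    have hxi : (x i : ℤ) = -1 := by
      rcases Int.units_eq_one_or (x i) with h | h
      · exact absurd h hi
      · simp [h]
    rw [if_neg hx]
    exact Finset.prod_eq_zero (Finset.mem_univ i) (by rw [hxi]; ring)

/-- A nonempty finite fraction `F ⊆ D = {-1,+1}^m` is regular (a coset of a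
subgroup of `D`) if and only if for every exponent vector `γ`, the sum
`∑_{t ∈ F} X^γ(t)` belongs to `{-|F|, 0, |F|}` (interactions are either
orthogonal or totally aliased on `F`). -/
theorem regular_iff_orthogonal_or_aliased (m : ℕ) (F : Finset (Fin m → ℤˣ))
    (hF : F.Nonempty) :
    (∃ (a : Fin m → ℤˣ) (H : Subgroup (Fin m → ℤˣ)),
        (F : Set (Fin m → ℤˣ)) = a • (H : Set (Fin m → ℤˣ))) ↔
    ∀ γ : Fin m → ZMod 2,
      (∑ t ∈ F, (Xmon γ t : ℤ)) ∈ ({-(F.card : ℤ), 0, (F.card : ℤ)} : Set ℤ) := by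
  obtain ⟨a₀, ha₀⟩ := hF
  constructor
  · rintro ⟨a, H, hFH⟩ γ
    have hmem : ∀ s, s ∈ F ↔ a * s ∈ H := by
      intro s
      rw [← Finset.mem_coe, hFH, Set.mem_smul_set_iff_inv_smul_mem, smul_eq_mul'', inv_self,
        SetLike.mem_coe]
    by_cases hconst : ∀ t ∈ F, (Xmon γ t : ℤ) = (Xmon γ a₀ : ℤ)
    · have : ∑ t ∈ F, (Xmon γ t : ℤ) = F.card * (Xmon γ a₀ : ℤ) := by
        rw [Finset.sum_congr rfl hconst, Finset.sum_const, nsmul_eq_mul]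
      rcases Int.units_eq_one_or (Xmon γ a₀) with h | h <;> rw [h] at this
      · right; right; simpa using this
      · left; simpa using this
    · push_neg at hconst
      obtain ⟨t, htF, hne⟩ := hconst
      set h₀ := a₀ * t with hh₀
      have hstep : ∀ s ∈ F, s * h₀ ∈ F := by
        intro s hs
        rw [hmem] at hs ha₀ htF ⊢
        have hmul := H.mul_mem hs (H.mul_mem ha₀ htF)
        have heq : (a * s) * ((a * a₀) * (a * t)) = a * (s * h₀) := by
          rw [hh₀]
          simp only [mul_assoc, mul_comm, mul_left_comm, mul_cancel_left']
        rwa [heq] at hmul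
      have hiff : ∀ s, s ∈ F ↔ s * h₀ ∈ F := by
        intro s
        refine ⟨hstep s, fun h => ?_⟩
        have := hstep _ h
        rwa [mul_assoc, sq_one, mul_one] at this
      have hval : (Xmon γ h₀ : ℤ) = -1 := by
        rw [hh₀, Xmon_mul_val]
        rcases Int.units_eq_one_or (Xmon γ a₀) with h1 | h1 <;>
          rcases Int.units_eq_one_or (Xmon γ t) with h2 | h2 <;>
          rw [h1, h2] at hne ⊢ <;> simp at hne ⊢
      have hS : ∑ s ∈ F, (Xmon γ s : ℤ) = ∑ s ∈ F, (Xmon γ (s * h₀) : ℤ) := by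
        refine Finset.sum_equiv (Equiv.mulRight h₀) (fun i => ?_) (fun i _ => ?_)
        · simpa using hiff i
        · simp only [Equiv.coe_mulRight]
          rw [mul_assoc, sq_one, mul_one]
      have hS2 : ∑ s ∈ F, (Xmon γ (s * h₀) : ℤ) = -∑ s ∈ F, (Xmon γ s : ℤ) := by
        rw [← Finset.sum_neg_distrib]
        refine Finset.sum_congr rfl fun s _ => ?_
        rw [Xmon_mul_val, hval]; ring
      right; left
      have := hS.trans hS2
      linarith
  · intro hsum
    -- closure: F is closed under t*u*v
    have compA : ∀ w : Fin m → ℤˣ,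
        ∑ γ : Fin m → ZMod 2, (∑ t ∈ F, (Xmon γ t : ℤ)) * (Xmon γ w : ℤ)
          = if w ∈ F then 2 ^ m else 0 := by
      intro w
      have : ∀ γ : Fin m → ZMod 2, (∑ t ∈ F, (Xmon γ t : ℤ)) * (Xmon γ w : ℤ)
          = ∑ t ∈ F, (Xmon γ (t * w) : ℤ) := by
        intro γ
        rw [Finset.sum_mul]
        exact Finset.sum_congr rfl fun t _ => (Xmon_mul_val γ t w).symm
      simp only [this]
      rw [Finset.sum_comm]
      have heq1 : ∀ t : Fin m → ℤˣ, (t * w = 1) ↔ t = w := by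
        intro t
        rw [mul_eq_one_iff_eq_inv, inv_self]
      calc ∑ t ∈ F, ∑ γ : Fin m → ZMod 2, (Xmon γ (t * w) : ℤ)
          = ∑ t ∈ F, if t = w then (2:ℤ) ^ m else 0 := by
            refine Finset.sum_congr rfl fun t _ => ?_
            rw [sum_Xmon, if_congr (heq1 t) rfl rfl]
        _ = if w ∈ F then 2 ^ m else 0 := Finset.sum_ite_eq' F w (fun _ => (2:ℤ)^m)
    have hclosed : ∀ t ∈ F, ∀ u ∈ F, ∀ v ∈ F, t * u * v ∈ F := by
      intro t₀ ht₀ u₀ hu₀ v₀ hv₀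
      set w := t₀ * u₀ * v₀ with hw
      have cube : ∀ γ : Fin m → ZMod 2,
          (∑ t ∈ F, (Xmon γ t : ℤ)) ^ 3 = (F.card : ℤ)^2 * ∑ t ∈ F, (Xmon γ t : ℤ) := by
        intro γ
        rcases hsum γ with h | h | h <;> rw [h] <;> ring
      have expand : ∀ γ : Fin m → ZMod 2,
          (∑ t ∈ F, (Xmon γ t : ℤ)) ^ 3 * (Xmon γ w : ℤ)
            = ∑ t ∈ F, ∑ u ∈ F, ∑ v ∈ F, (Xmon γ (t * u * v * w) : ℤ) := by
        intro γ
        simp only [Xmon_mul_val, pow_succ, pow_zero, one_mul, Finset.sum_mul, Finset.mul_sum]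
        refine Finset.sum_congr rfl fun t _ => Finset.sum_congr rfl fun u _ =>
          Finset.sum_congr rfl fun v _ => by ring
      have key : (F.card : ℤ)^2 * (if w ∈ F then (2:ℤ) ^ m else 0)
          = ∑ t ∈ F, ∑ u ∈ F, ∑ v ∈ F, (if t * u * v = w then (2:ℤ) ^ m else 0) := by
        calc (F.card : ℤ)^2 * (if w ∈ F then (2:ℤ) ^ m else 0)
            = (F.card : ℤ)^2 * ∑ γ : Fin m → ZMod 2,
                (∑ t ∈ F, (Xmon γ t : ℤ)) * (Xmon γ w : ℤ) := by rw [compA]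
          _ = ∑ γ : Fin m → ZMod 2, (∑ t ∈ F, (Xmon γ t : ℤ)) ^ 3 * (Xmon γ w : ℤ) := by
                rw [Finset.mul_sum]
                exact Finset.sum_congr rfl fun γ _ => by rw [cube γ]; ring
          _ = ∑ γ : Fin m → ZMod 2, ∑ t ∈ F, ∑ u ∈ F, ∑ v ∈ F, (Xmon γ (t * u * v * w) : ℤ) := by
                exact Finset.sum_congr rfl fun γ _ => expand γ
          _ = ∑ t ∈ F, ∑ u ∈ F, ∑ v ∈ F, ∑ γ : Fin m → ZMod 2, (Xmon γ (t * u * v * w) : ℤ) := by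
                rw [Finset.sum_comm]
                refine Finset.sum_congr rfl fun t _ => ?_
                rw [Finset.sum_comm]
                refine Finset.sum_congr rfl fun u _ => ?_
                rw [Finset.sum_comm]
          _ = ∑ t ∈ F, ∑ u ∈ F, ∑ v ∈ F, (if t * u * v = w then (2:ℤ) ^ m else 0) := by
                refine Finset.sum_congr rfl fun t _ => Finset.sum_congr rfl fun u _ =>
                  Finset.sum_congr rfl fun v _ => ?_
                rw [sum_Xmon]
                congr 1
                rw [mul_eq_one_iff_eq_inv, inv_self]
      have hpos : (0:ℤ) < ∑ t ∈ F, ∑ u ∈ F, ∑ v ∈ F, (if t * u * v = w then (2:ℤ) ^ m else 0) := by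
        have hnn : ∀ t u v : Fin m → ℤˣ, (0:ℤ) ≤ (if t * u * v = w then (2:ℤ) ^ m else 0) := by
          intro t u v; split <;> positivity
        refine Finset.sum_pos' (fun t _ => Finset.sum_nonneg fun u _ =>
          Finset.sum_nonneg fun v _ => hnn t u v) ⟨t₀, ht₀, ?_⟩
        refine Finset.sum_pos' (fun u _ => Finset.sum_nonneg fun v _ => hnn t₀ u v) ⟨u₀, hu₀, ?_⟩
        refine Finset.sum_pos' (fun v _ => hnn t₀ u₀ v) ⟨v₀, hv₀, ?_⟩
        rw [if_pos hw.symm]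
        positivity
      by_contra hwF
      rw [if_neg hwF, mul_zero] at key
      rw [← key] at hpos
      exact lt_irrefl 0 hpos
    -- build the subgroup
    refine ⟨a₀, {
      carrier := {x | a₀ * x ∈ F}
      one_mem' := by simpa using ha₀
      mul_mem' := by
        intro x y hx hy
        have hmul := hclosed _ hx _ hy _ ha₀
        have heq : (a₀ * x) * (a₀ * y) * a₀ = a₀ * (x * y) := by
          simp only [mul_assoc, mul_comm, mul_left_comm, mul_cancel_left']
        rw [heq] at hmul
        exact hmul
      inv_mem' := by
        intro x hx
        simpa [inv_self] using hx }, ?_⟩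
    ext x
    simp only [Finset.coe_sort_coe, Set.mem_smul_set, smul_eq_mul]
    constructor
    · intro hx
      exact ⟨a₀ * x, by
        show a₀ * (a₀ * x) ∈ F
        rwa [mul_cancel_left'], by
        rw [mul_cancel_left']⟩
    · rintro ⟨y, hy, rfl⟩
      exact hy
end

section
/- Let F ⊆ D = {−1,+1}^m be any fraction with indicator coefficients b_β = 2^{−m} · Σ_{t ∈ F} (X^β(t) : ℝ), let α_1, …, α_k ∈ Fin m → ZMod 2 and e_1, …, e_k ∈ {−1,+1}, and let R = {t ∈ D : X^{α_j}(t) = e_j for all j = 1,…,k}. Then the number of points of F ∩ R satisfies (|F ∩ R| : ℝ) = 2^{m−k} · Σ_{S ⊆ {1,…,k}} (∏_{j ∈ S} e_j) · b_{Σ_{j ∈ S} α_j}, where the sum runs over all subsets S of {1,…,k} and Σ_{j ∈ S} α_j is computed in (ZMod 2)^m. -/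
open scoped Classical

lemma zmod2_cases (a : ZMod 2) : a = 0 ∨ a = 1 := by
  fin_cases a
  · exact Or.inl rfl
  · exact Or.inr rfl

lemma units_pow_mod_two (u : ℤˣ) (n : ℕ) : u ^ (n % 2) = u ^ n := by
  conv_rhs => rw [← Nat.mod_add_div n 2]
  rw [pow_add, pow_mul, Int.units_sq, one_pow, mul_one]

lemma Xmon_eq_prod_pow {m : ℕ} (γ : Fin m → ZMod 2) (t : Fin m → ℤˣ) :
    Xmon γ t = ∏ i, t i ^ (γ i).val := by
  rw [Xmon, Finset.prod_filter]
  refine Finset.prod_congr rfl fun i _ => ?_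
  rcases zmod2_cases (γ i) with h | h <;> simp [h, ZMod.val_one]

lemma Xmon_add {m : ℕ} (β γ : Fin m → ZMod 2) (t : Fin m → ℤˣ) :
    Xmon (β + γ) t = Xmon β t * Xmon γ t := by
  rw [Xmon_eq_prod_pow, Xmon_eq_prod_pow, Xmon_eq_prod_pow, ← Finset.prod_mul_distrib]
  refine Finset.prod_congr rfl fun i _ => ?_
  have : ((β + γ) i).val = ((β i).val + (γ i).val) % 2 := by
    simp [Pi.add_apply, ZMod.val_add]
  rw [this, units_pow_mod_two, pow_add]

lemma Xmon_sum {m k : ℕ} (α : Fin k → Fin m → ZMod 2) (S : Finset (Fin k))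
    (t : Fin m → ℤˣ) : Xmon (∑ j ∈ S, α j) t = ∏ j ∈ S, Xmon (α j) t := by
  classical
  induction S using Finset.induction_on with
  | empty => simp [Xmon]
  | insert _ _ h ih =>
    rw [Finset.sum_insert h, Finset.prod_insert h, Xmon_add, ih]

/-- Counting the points of `F ∩ R` for a regular fraction
`R = {t : X^{α_j}(t) = e_j, j = 1,…,k}` in terms of the indicator coefficients
`b_β = 2^{-m} ∑_{t ∈ F} X^β(t)` of `F`:
`|F ∩ R| = 2^{m-k} ∑_{S ⊆ {1,…,k}} (∏_{j ∈ S} e_j) b_{∑_{j ∈ S} α_j}`. -/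
theorem card_inter_regular (m k : ℕ) (F : Finset (Fin m → ℤˣ))
    (b : (Fin m → ZMod 2) → ℝ)
    (hb : ∀ β, b β = (1 / 2 ^ m : ℝ) * ∑ t ∈ F, ((Xmon β t : ℤ) : ℝ))
    (α : Fin k → Fin m → ZMod 2) (e : Fin k → ℤˣ) :
    ((F.filter fun t => ∀ j, Xmon (α j) t = e j).card : ℝ) =
      (2 : ℝ) ^ ((m : ℤ) - (k : ℤ)) *
        ∑ S : Finset (Fin k), (∏ j ∈ S, ((e j : ℤ) : ℝ)) * b (∑ j ∈ S, α j) := by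
  classical
  have key : ∀ t : Fin m → ℤˣ,
      (∏ j : Fin k, (((e j : ℤ) : ℝ) * ((Xmon (α j) t : ℤ) : ℝ) + 1)) =
      if (∀ j, Xmon (α j) t = e j) then (2:ℝ)^k else 0 := by
    intro t
    split_ifs with h
    · rw [Finset.prod_congr rfl (fun j _ => ?_), Finset.prod_const, Finset.card_univ,
        Fintype.card_fin]
      rw [h j]
      have : ((e j : ℤ) : ℝ) * ((e j : ℤ) : ℝ) = 1 := by
        rcases Int.units_eq_one_or (e j) with h' | h' <;> simp [h']
      rw [this]; norm_num
    · push_neg at h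
      obtain ⟨j₀, hj⟩ := h
      apply Finset.prod_eq_zero (Finset.mem_univ j₀)
      rcases Int.units_eq_one_or (e j₀) with h1 | h1 <;>
        rcases Int.units_eq_one_or (Xmon (α j₀) t) with h2 | h2 <;>
        simp_all
  have expand : ∀ t : Fin m → ℤˣ,
      (∏ j : Fin k, (((e j : ℤ) : ℝ) * ((Xmon (α j) t : ℤ) : ℝ) + 1)) =
      ∑ S : Finset (Fin k), (∏ j ∈ S, ((e j : ℤ) : ℝ)) * ((Xmon (∑ j ∈ S, α j) t : ℤ) : ℝ) := by
    intro t
    rw [Finset.prod_add]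
    rw [← Finset.powerset_univ]
    refine Finset.sum_congr rfl fun S _ => ?_
    rw [Finset.prod_const_one, mul_one, Finset.prod_mul_distrib, Xmon_sum]
    push_cast
    ring
  have hcard : ((F.filter fun t => ∀ j, Xmon (α j) t = e j).card : ℝ) * (2:ℝ)^k =
      ∑ t ∈ F, ∑ S : Finset (Fin k),
        (∏ j ∈ S, ((e j : ℤ) : ℝ)) * ((Xmon (∑ j ∈ S, α j) t : ℤ) : ℝ) := by
    rw [← Finset.sum_congr rfl fun t _ => (expand t)]
    rw [Finset.sum_congr rfl fun t ht => key t]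
    rw [Finset.sum_ite, Finset.sum_const, Finset.sum_const_zero, add_zero, nsmul_eq_mul]
  rw [Finset.sum_comm] at hcard
  have h2k : ((2:ℝ)^k) ≠ 0 := by positivity
  have : ((F.filter fun t => ∀ j, Xmon (α j) t = e j).card : ℝ) =
      (∑ S : Finset (Fin k), (∏ j ∈ S, ((e j : ℤ) : ℝ)) *
        ∑ t ∈ F, ((Xmon (∑ j ∈ S, α j) t : ℤ) : ℝ)) / (2:ℝ)^k := by
    rw [eq_div_iff h2k, hcard]
    exact Finset.sum_congr rfl fun S _ => by rw [Finset.mul_sum]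
  rw [this]
  have hsum : ∀ β, (∑ t ∈ F, ((Xmon β t : ℤ) : ℝ)) = 2^m * b β := by
    intro β
    rw [hb β]
    field_simp
  rw [Finset.sum_congr rfl fun S _ => by rw [hsum]]
  rw [Finset.mul_sum]
  rw [Finset.sum_div]
  refine Finset.sum_congr rfl fun S _ => ?_
  rw [zpow_sub₀ (by norm_num : (2:ℝ) ≠ 0), zpow_natCast, zpow_natCast]
  field_simp
end
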